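/- Let Δ be the 8×8 Hermitian block-antidiagonal matrix Δ = [[0_{6×6}, M],[M†, 0_{2×2}]] where M is the 6×2 real matrix with nonzero entries M(2,1) = √2·g/4, M(3,1) = −1/4, M(4,2) = 1/4, M(5,2) = −√2·g/4 (1-indexed rows), and g ∈ [0,1]. Then the trace norm (nuclear norm) of Δ equals √(1+2g²). -/

import Mathlib

open Real in
/-- The 8×8 block-antidiagonal matrix `Δ = [[0, M],[Mᵀ, 0]]` built from the 6×2
matrix `M` with nonzero entries `M(2,1) = √2·g/4`, `M(3,1) = −1/4`,
`M(4,2) = 1/4`, `M(5,2) = −√2·g/4`. -/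
noncomputable def Δmat (g : ℝ) : Matrix (Fin 8) (Fin 8) ℝ :=
  !![0, 0, 0, 0, 0, 0, 0, 0;
     0, 0, 0, 0, 0, 0, Real.sqrt 2 * g / 4, 0;
     0, 0, 0, 0, 0, 0, -(1/4), 0;
     0, 0, 0, 0, 0, 0, 0, 1/4;
     0, 0, 0, 0, 0, 0, 0, -(Real.sqrt 2 * g / 4);
     0, 0, 0, 0, 0, 0, 0, 0;
     0, Real.sqrt 2 * g / 4, -(1/4), 0, 0, 0, 0, 0;
     0, 0, 0, 1/4, -(Real.sqrt 2 * g / 4), 0, 0, 0]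

namespace PBT8
open Matrix

lemma cons_val_five {α : Type*} {m : ℕ} (x : α) (u : Fin (m+5) → α) :
    vecCons x u 5 = vecHead (vecTail (vecTail (vecTail (vecTail u)))) := rfl
lemma cons_val_six {α : Type*} {m : ℕ} (x : α) (u : Fin (m+6) → α) :
    vecCons x u 6 = vecHead (vecTail (vecTail (vecTail (vecTail (vecTail u))))) := rfl
lemma cons_val_seven {α : Type*} {m : ℕ} (x : α) (u : Fin (m+7) → α) :
    vecCons x u 7 = vecHead (vecTail (vecTail (vecTail (vecTail (vecTail (vecTail u)))))) := rfl

/-- The square of `Δmat g`, as an explicit matrix. -/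
noncomputable def Esq (g : ℝ) : Matrix (Fin 8) (Fin 8) ℝ :=
  !![0, 0, 0, 0, 0, 0, 0, 0;
     0, g^2/8, -(Real.sqrt 2 * g/16), 0, 0, 0, 0, 0;
     0, -(Real.sqrt 2 * g/16), 1/16, 0, 0, 0, 0, 0;
     0, 0, 0, 1/16, -(Real.sqrt 2 * g/16), 0, 0, 0;
     0, 0, 0, -(Real.sqrt 2 * g/16), g^2/8, 0, 0, 0;
     0, 0, 0, 0, 0, 0, 0, 0;
     0, 0, 0, 0, 0, 0, (1+2*g^2)/16, 0;
     0, 0, 0, 0, 0, 0, 0, (1+2*g^2)/16]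

set_option maxHeartbeats 1000000 in
lemma sq_eq (g : ℝ) : Δmat g * Δmat g = Esq g := by
  have hs2 : (Real.sqrt 2) ^ 2 = 2 := Real.sq_sqrt (by norm_num)
  ext i j
  fin_cases i <;> fin_cases j <;>
    simp [Matrix.mul_apply, Fin.sum_univ_eight, Δmat, Esq, cons_val_five,
      cons_val_six, cons_val_seven, Matrix.vecHead, Matrix.vecTail] <;>
    first
      | ring1
      | linear_combination (g^2/16) * hs2
      | linear_combination (-(g^2/16)) * hs2

set_option maxHeartbeats 1000000 in
lemma cube_eq (g : ℝ) : Δmat g * Δmat g * Δmat g = ((1+2*g^2)/16) • Δmat g := by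
  have hs2 : (Real.sqrt 2) ^ 2 = 2 := Real.sq_sqrt (by norm_num)
  rw [sq_eq]
  ext i j
  fin_cases i <;> fin_cases j <;>
    simp [Matrix.mul_apply, Fin.sum_univ_eight, Δmat, Esq, cons_val_five,
      cons_val_six, cons_val_seven, Matrix.vecHead, Matrix.vecTail] <;>
    first
      | ring1
      | linear_combination (g^2/64) * hs2
      | linear_combination (-(g^2/64)) * hs2
      | linear_combination (Real.sqrt 2 * g^3/64) * hs2
      | linear_combination (-(Real.sqrt 2 * g^3/64)) * hs2

set_option maxHeartbeats 1000000 in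
lemma trace_sq (g : ℝ) : (Δmat g * Δmat g).trace = (1 + 2*g^2)/4 := by
  rw [sq_eq]
  simp [Matrix.trace, Matrix.diag, Esq, Fin.sum_univ_eight, cons_val_five,
    cons_val_six, cons_val_seven, Matrix.vecHead, Matrix.vecTail]
  ring

end PBT8

/-- The trace norm (sum of absolute values of the eigenvalues) of the Hermitian
matrix `Δ` equals `√(1+2g²)`. -/
theorem stmt_8 (g : ℝ) (hg : g ∈ Set.Icc (0 : ℝ) 1)
    (hΔ : (Δmat g).IsHermitian) :
    (∑ i, |hΔ.eigenvalues i|) = Real.sqrt (1 + 2 * g ^ 2) := by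
  have hpos : (0:ℝ) < 1 + 2 * g ^ 2 := by positivity
  set s : ℝ := Real.sqrt (1 + 2 * g ^ 2) with hs
  have hspos : 0 < s := Real.sqrt_pos.mpr hpos
  have hssq : s ^ 2 = 1 + 2 * g ^ 2 := Real.sq_sqrt hpos.le
  set σ : ℝ := s / 4 with hσ
  have hσpos : 0 < σ := by positivity
  have hσsq : σ ^ 2 = (1 + 2 * g ^ 2) / 16 := by
    rw [hσ, div_pow, hssq]; norm_num
  -- each eigenvalue λ satisfies λ^3 = ((1+2g²)/16) λ
  have key : ∀ i, |hΔ.eigenvalues i| = (hΔ.eigenvalues i) ^ 2 / σ := by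
    intro i
    set lam := hΔ.eigenvalues i with hlam
    have hv := hΔ.mulVec_eigenvectorBasis i
    set v : Fin 8 → ℝ := (hΔ.eigenvectorBasis i).ofLp with hvdef
    have hvne : v ≠ 0 := by
      intro h
      exact hΔ.eigenvectorBasis.orthonormal.ne_zero i (by ext x; exact congrFun h x)
    have h3 : Matrix.mulVec (Δmat g * Δmat g * Δmat g) v = (lam ^ 3) • v := by
      simp only [← Matrix.mulVec_mulVec, hv, Matrix.mulVec_smul, smul_smul]
      congr 1
      ring
    rw [PBT8.cube_eq, Matrix.smul_mulVec, hv, smul_smul] at h3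
    have hcube : lam ^ 3 = (1 + 2 * g ^ 2) / 16 * lam := by
      have := sub_eq_zero.mpr h3
      rw [← sub_smul] at this
      rcases smul_eq_zero.mp this with h | h
      · exact (sub_eq_zero.mp h).symm
      · exact absurd h hvne
    -- hence lam = 0 or lam² = σ²
    have hfac : lam * (lam ^ 2 - σ ^ 2) = 0 := by
      rw [hσsq]; linear_combination hcube
    rcases mul_eq_zero.mp hfac with h | h
    · simp [h]
    · have hl2 : lam ^ 2 = σ ^ 2 := sub_eq_zero.mp h
      have habs : |lam| = σ := by
        calc |lam| = Real.sqrt (lam ^ 2) := (Real.sqrt_sq_eq_abs lam).symm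
          _ = Real.sqrt (σ ^ 2) := by rw [hl2]
          _ = σ := Real.sqrt_sq hσpos.le
      rw [habs, hl2, sq, mul_div_assoc, div_self hσpos.ne', mul_one]
  -- sum of squares of eigenvalues = trace of Δ²
  have hsumsq : (∑ i, (hΔ.eigenvalues i) ^ 2) = (1 + 2 * g ^ 2) / 4 := by
    set U : Matrix (Fin 8) (Fin 8) ℝ := (hΔ.eigenvectorUnitary : Matrix (Fin 8) (Fin 8) ℝ)
      with hUdef
    set D : Matrix (Fin 8) (Fin 8) ℝ := Matrix.diagonal (RCLike.ofReal ∘ hΔ.eigenvalues)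
      with hDdef
    have hU : star U * U = 1 := Matrix.mem_unitaryGroup_iff'.mp hΔ.eigenvectorUnitary.2
    have hspec : Δmat g = U * D * star U := hΔ.spectral_theorem
    have hΔ2 : Δmat g * Δmat g = U * (D * D) * star U := by
      calc Δmat g * Δmat g = (U * D * star U) * (U * D * star U) := by rw [← hspec]
        _ = U * D * (star U * U) * D * star U := by
            simp only [Matrix.mul_assoc]
        _ = U * (D * D) * star U := by rw [hU]; simp only [Matrix.mul_assoc, Matrix.mul_one]
    have htr : Matrix.trace (Δmat g * Δmat g) = Matrix.trace (D * D) := by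
      rw [hΔ2, Matrix.trace_mul_cycle, ← Matrix.mul_assoc, hU, Matrix.one_mul]
    rw [PBT8.trace_sq] at htr
    rw [hDdef, Matrix.diagonal_mul_diagonal, Matrix.trace_diagonal] at htr
    rw [htr]
    refine Finset.sum_congr rfl fun i _ => ?_
    simp [pow_two]
  calc (∑ i, |hΔ.eigenvalues i|) = ∑ i, (hΔ.eigenvalues i) ^ 2 / σ := by
        exact Finset.sum_congr rfl fun i _ => key i
    _ = (∑ i, (hΔ.eigenvalues i) ^ 2) / σ := by rw [Finset.sum_div]
    _ = ((1 + 2 * g ^ 2) / 4) / σ := by rw [hsumsq]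
    _ = s := by
        rw [hσ]
        field_simp
        nlinarith [hssq]
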